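/- Let m₀, ℓ, n be positive integers with n ≥ 3 and ℓ | n, and let k be a unit modulo n with k^{m₀} ≡ 1 (mod n) and n | ℓ(k−1). Let G_{m₀,ℓ,n,k} be the metacyclic group with presentation ⟨x, y | x^{m₀} = y^ℓ, y^n = 1, x⁻¹yx = y^k⟩. Then there is a surjective group homomorphism from the split metacyclic group G_{m₀n/ℓ, n, k} onto G_{m₀,ℓ,n,k} sending x ↦ x and y ↦ y, and consequently diam(G_{m₀,ℓ,n,k}) ≤ diam(G_{m₀n/ℓ, n, k}), where both diameters are taken with respect to the generating set {x, x⁻¹, y, y⁻¹}. -/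

import Mathlib

/-- Relators of the split metacyclic group `⟨x, y | x^m = y^n = 1, x⁻¹yx = y^k⟩`,
with generator `0` playing the role of `x` and `1` that of `y`. -/
def metacyclicRels (m n k : ℕ) : Set (FreeGroup (Fin 2)) :=
  { FreeGroup.of 0 ^ m, FreeGroup.of 1 ^ n,
    (FreeGroup.of 0)⁻¹ * FreeGroup.of 1 * FreeGroup.of 0 * (FreeGroup.of 1 ^ k)⁻¹ }

/-- The split metacyclic group `G_{m,n,k} = ℤ_m ⋉_k ℤ_n
  = ⟨x, y | x^m = y^n = 1, x⁻¹yx = y^k⟩`. -/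
abbrev SplitMetacyclic (m n k : ℕ) : Type := PresentedGroup (metacyclicRels m n k)

/-- The generator `x` of `G_{m,n,k}`. -/
def xgen (m n k : ℕ) : SplitMetacyclic m n k := PresentedGroup.of 0

/-- The generator `y` of `G_{m,n,k}`. -/
def ygen (m n k : ℕ) : SplitMetacyclic m n k := PresentedGroup.of 1

/-- The word norm of `g` with respect to a set `S` of generators:
the least `t` such that `g` is a product of `t` elements of `S`. -/
noncomputable def wordNorm {G : Type*} [Group G] (S : Set G) (g : G) : ℕ :=
  sInf { t | ∃ w : List G, (∀ u ∈ w, u ∈ S) ∧ w.length = t ∧ w.prod = g }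

/-- The diameter of a group with respect to a set `S` of generators. -/
noncomputable def diam {G : Type*} [Group G] (S : Set G) : ℕ :=
  ⨆ g : G, wordNorm S g

/-- The generating set `{x, x⁻¹, y, y⁻¹}` of `G_{m,n,k}`. -/
def genSet (m n k : ℕ) : Set (SplitMetacyclic m n k) :=
  {xgen m n k, (xgen m n k)⁻¹, ygen m n k, (ygen m n k)⁻¹}

/-- Relators of the general metacyclic group
`⟨x, y | x^{m₀} = y^ℓ, y^n = 1, x⁻¹yx = y^k⟩`. -/
def metacyclicRels' (m₀ l n k : ℕ) : Set (FreeGroup (Fin 2)) :=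
  { FreeGroup.of 0 ^ m₀ * (FreeGroup.of 1 ^ l)⁻¹, FreeGroup.of 1 ^ n,
    (FreeGroup.of 0)⁻¹ * FreeGroup.of 1 * FreeGroup.of 0 * (FreeGroup.of 1 ^ k)⁻¹ }

/-- The metacyclic group `G_{m₀,ℓ,n,k} = ⟨x, y | x^{m₀} = y^ℓ, y^n = 1, x⁻¹yx = y^k⟩`. -/
abbrev Metacyclic (m₀ l n k : ℕ) : Type := PresentedGroup (metacyclicRels' m₀ l n k)

/-- The generator `x` of `G_{m₀,ℓ,n,k}`. -/
def xgen' (m₀ l n k : ℕ) : Metacyclic m₀ l n k := PresentedGroup.of 0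

/-- The generator `y` of `G_{m₀,ℓ,n,k}`. -/
def ygen' (m₀ l n k : ℕ) : Metacyclic m₀ l n k := PresentedGroup.of 1

/-- The generating set `{x, x⁻¹, y, y⁻¹}` of `G_{m₀,ℓ,n,k}`. -/
def genSet' (m₀ l n k : ℕ) : Set (Metacyclic m₀ l n k) :=
  {xgen' m₀ l n k, (xgen' m₀ l n k)⁻¹, ygen' m₀ l n k, (ygen' m₀ l n k)⁻¹}


section Aux

lemma presented_rel_one {α : Type*} {rels : Set (FreeGroup α)} {r : FreeGroup α}
    (h : r ∈ rels) : PresentedGroup.mk rels r = 1 := by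
  change ((QuotientGroup.mk r : FreeGroup α ⧸ Subgroup.normalClosure rels)) = 1
  rw [QuotientGroup.eq_one_iff]
  exact Subgroup.subset_normalClosure h

lemma pow_mod_eq {G : Type*} [Group G] {z : G} {m : ℕ} (hz : z ^ m = 1) (t : ℕ) :
    z ^ t = z ^ (t % m) := by
  conv_lhs => rw [← Nat.div_add_mod t m]
  rw [pow_add, pow_mul, hz, one_pow, one_mul]

lemma exists_rep {G : Type*} [Group G] {x y : G} {M n k : ℕ} (hM : 0 < M) (hn : 0 < n)
    (hx : x ^ M = 1) (hy : y ^ n = 1) (hyx : y * x = x * y ^ k)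
    (htop : Subgroup.closure ({x, y} : Set G) = ⊤) (g : G) :
    ∃ a b : ℕ, a < M ∧ b < n ∧ g = x ^ a * y ^ b := by
  have k1 : ∀ b : ℕ, y ^ b * x = x * y ^ (b * k) := by
    intro b
    induction b with
    | zero => simp
    | succ b ih =>
      rw [pow_succ, mul_assoc, hyx, ← mul_assoc, ih, mul_assoc, ← pow_add, add_one_mul]
  have key : ∀ b c : ℕ, y ^ b * x ^ c = x ^ c * y ^ (b * k ^ c) := by
    intro b c
    induction c with
    | zero => simp
    | succ c ih =>
      rw [pow_succ x, ← mul_assoc, ih, mul_assoc, k1, ← mul_assoc, ← pow_succ,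
        pow_succ k, ← mul_assoc]
  have hmem : ∃ a b : ℕ, g = x ^ a * y ^ b := by
    have hg : g ∈ Subgroup.closure ({x, y} : Set G) := htop ▸ Subgroup.mem_top g
    induction hg using Subgroup.closure_induction with
    | mem z hz =>
      rcases hz with rfl | rfl
      · exact ⟨1, 0, by simp⟩
      · exact ⟨0, 1, by simp⟩
    | one => exact ⟨0, 0, by simp⟩
    | mul u v _ _ hu hv =>
      obtain ⟨a, b, rfl⟩ := hu
      obtain ⟨c, d, rfl⟩ := hv
      refine ⟨a + c, b * k ^ c + d, ?_⟩
      calc x ^ a * y ^ b * (x ^ c * y ^ d) = x ^ a * (y ^ b * x ^ c) * y ^ d := by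
            group
        _ = x ^ a * (x ^ c * y ^ (b * k ^ c)) * y ^ d := by rw [key]
        _ = x ^ (a + c) * y ^ (b * k ^ c + d) := by rw [pow_add, pow_add]; group
    | inv u _ hu =>
      obtain ⟨a, b, rfl⟩ := hu
      have hxi : (x ^ a)⁻¹ = x ^ (a * (M - 1)) := by
        refine inv_eq_of_mul_eq_one_right ?_
        rw [← pow_add]
        have : a + a * (M - 1) = M * a := by
          cases M with
          | zero => omega
          | succ M' => simp only [Nat.add_sub_cancel]; ring
        rw [this, pow_mul, hx, one_pow]
      have hyi : (y ^ b)⁻¹ = y ^ (b * (n - 1)) := by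
        refine inv_eq_of_mul_eq_one_right ?_
        rw [← pow_add]
        have : b + b * (n - 1) = n * b := by
          cases n with
          | zero => omega
          | succ n' => simp only [Nat.add_sub_cancel]; ring
        rw [this, pow_mul, hy, one_pow]
      refine ⟨a * (M - 1), b * (n - 1) * k ^ (a * (M - 1)), ?_⟩
      rw [mul_inv_rev, hxi, hyi, key]
  obtain ⟨a, b, rfl⟩ := hmem
  exact ⟨a % M, b % n, Nat.mod_lt _ hM, Nat.mod_lt _ hn,
    by rw [pow_mod_eq hx a, pow_mod_eq hy b]⟩

end Aux

section MainAux

lemma ppow_mod_eq2 {G : Type*} [Group G] {z : G} {m : ℕ} (hz : z ^ m = 1) (t : ℕ) :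
    z ^ t = z ^ (t % m) := pow_mod_eq hz t

lemma wordNorm_le {G : Type*} [Group G] {S : Set G} {g : G} {t : ℕ} (w : List G)
    (h1 : ∀ u ∈ w, u ∈ S) (h2 : w.length = t) (h3 : w.prod = g) : wordNorm S g ≤ t :=
  Nat.sInf_le ⟨w, h1, h2, h3⟩

end MainAux

/-- There is a surjection `G_{m₀n/ℓ, n, k} ↠ G_{m₀,ℓ,n,k}` sending `x ↦ x` and
`y ↦ y`; consequently `diam(G_{m₀,ℓ,n,k}) ≤ diam(G_{m₀n/ℓ, n, k})`. -/
theorem metacyclic_quotient_diam_bound (m₀ l n k : ℕ) (hm₀ : 0 < m₀)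
    (hl : 0 < l) (hn : 3 ≤ n) (hdvd : l ∣ n) (hk : Nat.Coprime k n)
    (hkm : k ^ m₀ ≡ 1 [MOD n]) (hcond : n ∣ l * (k - 1)) :
    (∃ f : SplitMetacyclic (m₀ * n / l) n k →* Metacyclic m₀ l n k,
      Function.Surjective f ∧
      f (xgen (m₀ * n / l) n k) = xgen' m₀ l n k ∧
      f (ygen (m₀ * n / l) n k) = ygen' m₀ l n k) ∧
    diam (genSet' m₀ l n k) ≤ diam (genSet (m₀ * n / l) n k) := by
  set M := m₀ * n / l with hMdef
  have hn0 : 0 < n := by omega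
  have hM : 0 < M := by
    have : 0 < m₀ * n := Nat.mul_pos hm₀ hn0
    exact Nat.div_pos (Nat.le_of_dvd this (Dvd.dvd.mul_left hdvd m₀)) hl
  -- relations in the Metacyclic group
  have r1' : xgen' m₀ l n k ^ m₀ = ygen' m₀ l n k ^ l := by
    have h := presented_rel_one (rels := metacyclicRels' m₀ l n k)
      (Set.mem_insert _ _)
    rw [map_mul, map_inv, map_pow, map_pow] at h
    exact mul_inv_eq_one.mp h
  have r2' : ygen' m₀ l n k ^ n = 1 := by
    have h := presented_rel_one (rels := metacyclicRels' m₀ l n k)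
      (Set.mem_insert_of_mem _ (Set.mem_insert _ _))
    rw [map_pow] at h
    exact h
  have r3' : (xgen' m₀ l n k)⁻¹ * ygen' m₀ l n k * xgen' m₀ l n k
      = ygen' m₀ l n k ^ k := by
    have h := presented_rel_one (rels := metacyclicRels' m₀ l n k)
      (Set.mem_insert_of_mem _ (Set.mem_insert_of_mem _ rfl))
    rw [map_mul, map_inv, map_mul, map_mul, map_inv, map_pow] at h
    exact mul_inv_eq_one.mp h
  -- relations in the split metacyclic group
  have r1 : xgen M n k ^ M = 1 := by
    have h := presented_rel_one (rels := metacyclicRels M n k) (Set.mem_insert _ _)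
    rw [map_pow] at h; exact h
  have r2 : ygen M n k ^ n = 1 := by
    have h := presented_rel_one (rels := metacyclicRels M n k)
      (Set.mem_insert_of_mem _ (Set.mem_insert _ _))
    rw [map_pow] at h; exact h
  have r3 : (xgen M n k)⁻¹ * ygen M n k * xgen M n k = ygen M n k ^ k := by
    have h := presented_rel_one (rels := metacyclicRels M n k)
      (Set.mem_insert_of_mem _ (Set.mem_insert_of_mem _ rfl))
    rw [map_mul, map_inv, map_mul, map_mul, map_inv, map_pow] at h
    exact mul_inv_eq_one.mp h
  have hyx : ygen M n k * xgen M n k = xgen M n k * ygen M n k ^ k := by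
    rw [← r3]; group
  -- construct the homomorphism
  set F : Fin 2 → Metacyclic m₀ l n k := ![xgen' m₀ l n k, ygen' m₀ l n k] with hF
  have hFrel : ∀ r ∈ metacyclicRels M n k, FreeGroup.lift F r = 1 := by
    intro r hr
    simp only [metacyclicRels, Set.mem_insert_iff, Set.mem_singleton_iff] at hr
    rcases hr with rfl | rfl | rfl
    · rw [map_pow, FreeGroup.lift_apply_of]
      show xgen' m₀ l n k ^ M = 1
      rw [hMdef, Nat.mul_div_assoc m₀ hdvd, pow_mul, r1', ← pow_mul,
        Nat.mul_div_cancel' hdvd, r2']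
    · rw [map_pow, FreeGroup.lift_apply_of]
      show ygen' m₀ l n k ^ n = 1
      exact r2'
    · rw [map_mul, map_inv, map_mul, map_mul, map_inv, map_pow,
        FreeGroup.lift_apply_of, FreeGroup.lift_apply_of]
      show (xgen' m₀ l n k)⁻¹ * ygen' m₀ l n k * xgen' m₀ l n k
        * (ygen' m₀ l n k ^ k)⁻¹ = 1
      rw [r3', mul_inv_cancel]
  set f : SplitMetacyclic M n k →* Metacyclic m₀ l n k := PresentedGroup.toGroup hFrel
    with hfdef
  have hfx : f (xgen M n k) = xgen' m₀ l n k := by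
    show PresentedGroup.toGroup hFrel (PresentedGroup.of 0) = _
    rw [PresentedGroup.toGroup.of]; simp [hF]
  have hfy : f (ygen M n k) = ygen' m₀ l n k := by
    show PresentedGroup.toGroup hFrel (PresentedGroup.of 1) = _
    rw [PresentedGroup.toGroup.of]; simp [hF]
  have hsurj : Function.Surjective f := by
    rw [← MonoidHom.range_eq_top]
    rw [eq_top_iff, ← PresentedGroup.closure_range_of (metacyclicRels' m₀ l n k)]
    rw [Subgroup.closure_le]
    rintro _ ⟨i, rfl⟩
    fin_cases i
    · exact ⟨xgen M n k, hfx⟩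
    · exact ⟨ygen M n k, hfy⟩
  -- generators generate the split group
  have htop : Subgroup.closure ({xgen M n k, ygen M n k} :
      Set (SplitMetacyclic M n k)) = ⊤ := by
    rw [eq_top_iff, ← PresentedGroup.closure_range_of (metacyclicRels M n k)]
    apply Subgroup.closure_mono
    rintro _ ⟨i, rfl⟩
    fin_cases i
    · exact Set.mem_insert _ _
    · exact Set.mem_insert_of_mem _ rfl
  -- representation and word bound
  have hrep := fun g => exists_rep hM hn0 r1 r2 hyx htop g
  have hxmem : xgen M n k ∈ genSet M n k := Set.mem_insert _ _
  have hymem : ygen M n k ∈ genSet M n k :=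
    Set.mem_insert_of_mem _ (Set.mem_insert_of_mem _ (Set.mem_insert _ _))
  have hwordset : ∀ g : SplitMetacyclic M n k,
      {t | ∃ w : List (SplitMetacyclic M n k),
        (∀ u ∈ w, u ∈ genSet M n k) ∧ w.length = t ∧ w.prod = g}.Nonempty := by
    intro g
    obtain ⟨a, b, _, _, rfl⟩ := hrep g
    refine ⟨a + b, List.replicate a (xgen M n k) ++ List.replicate b (ygen M n k),
      ?_, by simp, by simp⟩
    intro u hu
    rcases List.mem_append.mp hu with h | h
    · rw [List.eq_of_mem_replicate h]; exact hxmem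
    · rw [List.eq_of_mem_replicate h]; exact hymem
  have hword : ∀ g : SplitMetacyclic M n k, wordNorm (genSet M n k) g ≤ M + n := by
    intro g
    obtain ⟨a, b, haM, hbn, rfl⟩ := hrep g
    refine le_trans (wordNorm_le
      (List.replicate a (xgen M n k) ++ List.replicate b (ygen M n k))
      ?_ rfl (by simp)) ?_
    · intro u hu
      rcases List.mem_append.mp hu with h | h
      · rw [List.eq_of_mem_replicate h]; exact hxmem
      · rw [List.eq_of_mem_replicate h]; exact hymem
    · simp only [List.length_append, List.length_replicate]; omega
  have hbdd : BddAbove (Set.range (wordNorm (genSet M n k))) := by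
    refine ⟨M + n, ?_⟩
    rintro _ ⟨g, rfl⟩
    exact hword g
  refine ⟨⟨f, hsurj, hfx, hfy⟩, ?_⟩
  -- the diameter bound
  have hpush : ∀ g : SplitMetacyclic M n k,
      wordNorm (genSet' m₀ l n k) (f g) ≤ wordNorm (genSet M n k) g := by
    intro g
    obtain ⟨w, hw1, hw2, hw3⟩ := Nat.sInf_mem (hwordset g)
    refine wordNorm_le (w.map f) ?_ (by rw [List.length_map]; exact hw2) ?_
    · intro u hu
      obtain ⟨v, hv, rfl⟩ := List.mem_map.mp hu
      have hvS := hw1 v hv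
      simp only [genSet, Set.mem_insert_iff, Set.mem_singleton_iff] at hvS
      rcases hvS with rfl | rfl | rfl | rfl
      · rw [hfx]; exact Set.mem_insert _ _
      · rw [map_inv, hfx]
        exact Set.mem_insert_of_mem _ (Set.mem_insert _ _)
      · rw [hfy]
        exact Set.mem_insert_of_mem _ (Set.mem_insert_of_mem _ (Set.mem_insert _ _))
      · rw [map_inv, hfy]
        exact Set.mem_insert_of_mem _ (Set.mem_insert_of_mem _
          (Set.mem_insert_of_mem _ rfl))
    · rw [← hw3]
      exact (map_list_prod f w).symm
  apply ciSup_le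
  intro g'
  obtain ⟨g, rfl⟩ := hsurj g'
  exact le_trans (hpush g) (le_ciSup hbdd g)
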